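/- Let k > 0 and φ > 0, set c0 = k·coth(φ), fix ξ0 ∈ ℝ, let ξ = x − c0·t − ξ0, and let u(x,t) = k·sinh(φ)/(cos(kξ) + cosh(φ)). For λ ∈ ℝ define φ⁺(x,t) = e^{i λ x + i λ² t}·(1 + e^{i k ξ + φ})/(1 + e^{i k ξ − φ}). Then 1 + e^{i k ξ − φ} ≠ 0 for all real (x,t), and φ⁺ satisfies the first equation of the Lax pair of the Benjamin–Ono equation with φ⁻ ≡ 0: i ∂_x φ⁺ + λ φ⁺ + u φ⁺ = 0 at every real (x,t). -/

import Mathlib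

/-- the function `φ⁺(x,t) = e^{iλx + iλ²t}(1 + e^{ikξ+φ})/(1 + e^{ikξ−φ})`
satisfies the first Lax equation `i ∂_x φ⁺ + λ φ⁺ + u φ⁺ = 0` (with `φ⁻ ≡ 0`)
of the Benjamin–Ono equation on the traveling periodic wave background. -/
theorem lax_eigenfunction_phi_minus_zero (k φ ξ0 c0 lam : ℝ) (hk : 0 < k) (hφ : 0 < φ)
    (hc0 : c0 = k * Real.cosh φ / Real.sinh φ)
    (u : ℝ → ℝ → ℝ)
    (hu : ∀ x t : ℝ, u x t =
      k * Real.sinh φ / (Real.cos (k * (x - c0 * t - ξ0)) + Real.cosh φ))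
    (Φ : ℝ → ℝ → ℂ)
    (hΦ : ∀ x t : ℝ, Φ x t =
      Complex.exp (Complex.I * lam * x + Complex.I * (lam ^ 2) * t)
        * (1 + Complex.exp (Complex.I * (k * (x - c0 * t - ξ0)) + φ))
        / (1 + Complex.exp (Complex.I * (k * (x - c0 * t - ξ0)) - φ))) :
    ∀ x t : ℝ,
      (1 + Complex.exp (Complex.I * (k * (x - c0 * t - ξ0)) - φ)) ≠ 0 ∧
      Complex.I * deriv (fun y => Φ y t) x + lam * Φ x t + (u x t : ℂ) * Φ x t = 0 := by
  intro x t
  have hw : Complex.I * ((k : ℂ) * ((x:ℂ) - (c0:ℂ) * t - (ξ0:ℂ)))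
      = ((k * (x - c0 * t - ξ0) : ℝ) : ℂ) * Complex.I := by push_cast; ring
  set r : ℝ := k * (x - c0 * t - ξ0) with hrdef
  set A : ℂ := Complex.exp ((r:ℂ) * Complex.I) with hA
  set B : ℂ := Complex.exp ((φ:ℝ) : ℂ) with hB
  have hAne : A ≠ 0 := Complex.exp_ne_zero _
  have hBne : B ≠ 0 := Complex.exp_ne_zero _
  have hP : Complex.exp (Complex.I * ((k : ℂ) * ((x:ℂ) - (c0:ℂ) * t - (ξ0:ℂ))) + (φ:ℂ)) = A * B := by
    rw [hw, Complex.exp_add]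
  have hM : Complex.exp (Complex.I * ((k : ℂ) * ((x:ℂ) - (c0:ℂ) * t - (ξ0:ℂ))) - (φ:ℂ)) = A * B⁻¹ := by
    rw [hw, sub_eq_add_neg, Complex.exp_add, Complex.exp_neg]
  have hAabs : ‖A‖ = 1 := by
    rw [hA, Complex.norm_exp]
    have : ((r:ℂ) * Complex.I).re = 0 := by simp
    rw [this, Real.exp_zero]
  have hMabs : ‖A * B⁻¹‖ < 1 := by
    rw [norm_mul, norm_inv, hAabs, one_mul, hB, Complex.norm_exp, Complex.ofReal_re]
    exact inv_lt_one_of_one_lt₀ (Real.one_lt_exp_iff.mpr hφ)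
  have hDne : (1 : ℂ) + Complex.exp (Complex.I * ((k : ℂ) * ((x:ℂ) - (c0:ℂ) * t - (ξ0:ℂ))) - (φ:ℂ)) ≠ 0 := by
    rw [hM]
    intro h
    have h2 : A * B⁻¹ = -1 := by linear_combination h
    rw [h2] at hMabs
    simp at hMabs
  refine ⟨hDne, ?_⟩
  -- positivity of the real denominator
  have hco : (1:ℝ) < Real.cosh φ := by
    rw [Real.one_lt_cosh]; exact hφ.ne'
  have hden_pos : 0 < Real.cos r + Real.cosh φ := by
    have := Real.neg_one_le_cos r
    linarith
  -- derivative computation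
  have base : HasDerivAt (fun w : ℂ => Complex.I * ((k:ℂ) * (w - (c0:ℂ) * (t:ℂ) - (ξ0:ℂ))))
      (Complex.I * (k:ℂ)) (x:ℂ) := by
    simpa [mul_assoc] using
      ((((hasDerivAt_id (x:ℂ)).sub_const ((c0:ℂ) * (t:ℂ))).sub_const
        ((ξ0:ℂ))).const_mul (k:ℂ)).const_mul Complex.I
  have hlin : HasDerivAt (fun w : ℂ => Complex.I * (lam:ℂ) * w + Complex.I * ((lam:ℂ))^2 * (t:ℂ))
      (Complex.I * (lam:ℂ)) (x:ℂ) := by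
    simpa using ((hasDerivAt_id (x:ℂ)).const_mul (Complex.I * (lam:ℂ))).add_const
      (Complex.I * ((lam:ℂ))^2 * (t:ℂ))
  set E : ℂ := Complex.exp (Complex.I * (lam:ℂ) * (x:ℂ) + Complex.I * ((lam:ℂ))^2 * (t:ℂ)) with hE
  set P : ℂ := Complex.exp (Complex.I * ((k:ℂ) * ((x:ℂ) - (c0:ℂ) * (t:ℂ) - (ξ0:ℂ))) + (φ:ℂ)) with hPdef
  set Mx : ℂ := Complex.exp (Complex.I * ((k:ℂ) * ((x:ℂ) - (c0:ℂ) * (t:ℂ) - (ξ0:ℂ))) - (φ:ℂ)) with hMdef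
  have hE1 := hlin.cexp
  have hP' := (base.add_const ((φ:ℝ) : ℂ)).cexp
  have hM' := (base.sub_const ((φ:ℝ) : ℂ)).cexp
  have hN := hE1.mul (hP'.const_add 1)
  have hF := hN.div (hM'.const_add 1) hDne
  have hF2 : HasDerivAt (fun y : ℝ =>
      Complex.exp (Complex.I * (lam:ℂ) * (y:ℂ) + Complex.I * ((lam:ℂ))^2 * (t:ℂ))
        * (1 + Complex.exp (Complex.I * ((k:ℂ) * ((y:ℂ) - (c0:ℂ) * (t:ℂ) - (ξ0:ℂ))) + (φ:ℂ)))
        / (1 + Complex.exp (Complex.I * ((k:ℂ) * ((y:ℂ) - (c0:ℂ) * (t:ℂ) - (ξ0:ℂ))) - (φ:ℂ))))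
      (Complex.I * E * ((lam:ℂ) * (1 + P) * (1 + Mx) + (k:ℂ) * P * (1 + Mx)
          - (k:ℂ) * Mx * (1 + P)) / (1 + Mx)^2) x := by
    convert hF.comp_ofReal using 1
    · rfl
    simp only [Pi.mul_apply]; ring
  have hfun : (fun y : ℝ => Φ y t) = (fun y : ℝ =>
      Complex.exp (Complex.I * (lam:ℂ) * (y:ℂ) + Complex.I * ((lam:ℂ))^2 * (t:ℂ))
        * (1 + Complex.exp (Complex.I * ((k:ℂ) * ((y:ℂ) - (c0:ℂ) * (t:ℂ) - (ξ0:ℂ))) + (φ:ℂ)))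
        / (1 + Complex.exp (Complex.I * ((k:ℂ) * ((y:ℂ) - (c0:ℂ) * (t:ℂ) - (ξ0:ℂ))) - (φ:ℂ)))) :=
    funext fun y => hΦ y t
  have hd : deriv (fun y => Φ y t) x
      = Complex.I * E * ((lam:ℂ) * (1 + P) * (1 + Mx) + (k:ℂ) * P * (1 + Mx)
          - (k:ℂ) * Mx * (1 + P)) / (1 + Mx)^2 := by
    rw [hfun]; exact hF2.deriv
  -- trig identities
  have e1 : ((Real.cos r : ℝ) : ℂ) = (A + A⁻¹)/2 := by
    have h := Complex.two_cos ((r:ℝ) : ℂ)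
    have hneg : Complex.exp (-((r:ℝ):ℂ) * Complex.I) = A⁻¹ := by
      rw [neg_mul, Complex.exp_neg, ← hA]
    rw [hneg, ← hA] at h
    rw [Complex.ofReal_cos, eq_div_iff (two_ne_zero : (2:ℂ) ≠ 0)]
    linear_combination h
  have e2 : ((Real.sinh φ : ℝ) : ℂ) = (B - B⁻¹)/2 := by
    have h := Complex.two_sinh ((φ:ℝ) : ℂ)
    rw [Complex.exp_neg, ← hB] at h
    rw [Complex.ofReal_sinh, eq_div_iff (two_ne_zero : (2:ℂ) ≠ 0)]
    linear_combination h
  have e3 : ((Real.cosh φ : ℝ) : ℂ) = (B + B⁻¹)/2 := by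
    have h := Complex.two_cosh ((φ:ℝ) : ℂ)
    rw [Complex.exp_neg, ← hB] at h
    rw [Complex.ofReal_cosh, eq_div_iff (two_ne_zero : (2:ℂ) ≠ 0)]
    linear_combination h
  -- the key algebraic identity
  have hdne2 : ((A + A⁻¹)/2 + (B + B⁻¹)/2 : ℂ) ≠ 0 := by
    have h0 : ((Real.cos r + Real.cosh φ : ℝ) : ℂ) ≠ 0 :=
      Complex.ofReal_ne_zero.mpr hden_pos.ne'
    rw [Complex.ofReal_add, e1, e3] at h0
    exact h0
  have hPabs : 1 < ‖A * B‖ := by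
    rw [norm_mul, hAabs, one_mul, hB, Complex.norm_exp, Complex.ofReal_re]
    exact Real.one_lt_exp_iff.mpr hφ
  have hPne2 : (1 : ℂ) + A * B ≠ 0 := by
    intro h
    have h2 : A * B = -1 := by linear_combination h
    rw [h2] at hPabs
    simp at hPabs
  have hDne2 : (1 : ℂ) + A * B⁻¹ ≠ 0 := by rw [← hM]; exact hDne
  have hprod_ne : ((1 : ℂ) + A * B) * (1 + A * B⁻¹) ≠ 0 := mul_ne_zero hPne2 hDne2
  have hkey : ((u x t : ℝ) : ℂ) * ((1 + A * B) * (1 + A * B⁻¹)) = (k:ℂ) * (A * B - A * B⁻¹) := by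
    rw [hu x t, ← hrdef, Complex.ofReal_div, Complex.ofReal_mul, Complex.ofReal_add,
      e1, e2, e3]
    rw [div_mul_eq_mul_div, div_eq_iff hdne2]
    field_simp
    ring
  have hukey : ((u x t : ℝ) : ℂ) = (k:ℂ) * (A * B - A * B⁻¹) / ((1 + A * B) * (1 + A * B⁻¹)) := by
    rw [eq_div_iff hprod_ne]; exact hkey
  -- finish
  rw [hΦ x t, hd]
  rw [← hE, ← hPdef, ← hMdef, hP, hM] at *
  rw [hukey]
  obtain ⟨C, hC⟩ : ∃ C : ℂ, B⁻¹ = C := ⟨B⁻¹, rfl⟩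
  rw [hC] at hDne2 ⊢
  rw [show Complex.I * (Complex.I * E * ((lam:ℂ) * (1 + A * B) * (1 + A * C)
        + (k:ℂ) * (A * B) * (1 + A * C) - (k:ℂ) * (A * C) * (1 + A * B)) / (1 + A * C)^2)
      = (Complex.I * Complex.I) * (E * ((lam:ℂ) * (1 + A * B) * (1 + A * C)
        + (k:ℂ) * (A * B) * (1 + A * C) - (k:ℂ) * (A * C) * (1 + A * B)) / (1 + A * C)^2)
    from by ring, Complex.I_mul_I]
  field_simp [hPne2, hDne2]
  ring
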